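/- For n divisible by 4 with n ≥ 20, the family {S_{k_1} : 5 ≤ k_1 ≤ n/4 + 2} with S_{k_1} = {1,4} ∪ {k_1+1, ..., n/2+k_1-2} has union-closure of size at least c·n² for some constant c > 0 (in fact the closure has size Ω(n²)). -/

import Mathlib

/-- The union-closure of a family: all unions of nonempty finite subfamilies. -/
def unionClosure (S : Set (Finset ℕ)) : Set (Finset ℕ) :=
  {A | ∃ T : Finset (Finset ℕ), ↑T ⊆ S ∧ T.Nonempty ∧ A = T.sup id}

/-- There is a constant `c > 0` such that for all `n` divisible by 4 with
`n ≥ 20`, the union-closure of `{S_{k₁} = {1,4} ∪ {k₁+1,…,n/2+k₁-2} : 5 ≤ k₁ ≤ n/4+2}`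
has size at least `c·n²`. -/
theorem stmt_13 :
    ∃ c : ℝ, 0 < c ∧ ∀ n : ℕ, 4 ∣ n → 20 ≤ n →
      c * (n : ℝ) ^ 2 ≤
        (unionClosure {A | ∃ k, 5 ≤ k ∧ k ≤ n / 4 + 2 ∧
          A = {1, 4} ∪ Finset.Icc (k + 1) (n / 2 + k - 2)}).ncard := by
  refine ⟨1/512, by norm_num, ?_⟩
  intro n hdvd hn
  obtain ⟨q, rfl⟩ := hdvd
  have hq : 5 ≤ q := by omega
  have h4 : 4 * q / 4 = q := by omega
  have h2 : 4 * q / 2 = 2 * q := by omega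
  set S : Set (Finset ℕ) := {A | ∃ k, 5 ≤ k ∧ k ≤ 4 * q / 4 + 2 ∧
      A = {1, 4} ∪ Finset.Icc (k + 1) (4 * q / 2 + k - 2)} with hS
  -- the closure is finite
  have hfin : (unionClosure S).Finite := by
    apply Set.Finite.subset ((Finset.range (3*q+1)).powerset.finite_toSet)
    intro A hA
    obtain ⟨T, hTS, -, rfl⟩ := hA
    simp only [Finset.coe_powerset, Set.mem_preimage, Set.mem_powerset_iff,
      Finset.coe_subset]
    show Finset.sup T id ≤ Finset.range (3*q+1)
    refine Finset.sup_le fun B hB => ?_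
    obtain ⟨k, hk1, hk2, rfl⟩ := hTS hB
    intro x hx
    simp only [id_eq, Finset.mem_union, Finset.mem_insert, Finset.mem_singleton,
      Finset.mem_Icc] at hx
    simp only [Finset.mem_range]
    omega
  -- index set of pairs
  set I : Finset ℕ := Finset.Icc 5 (q+2) with hI
  set P : Finset (ℕ × ℕ) := (I ×ˢ I).filter (fun p => p.1 ≤ p.2) with hP
  set f : ℕ × ℕ → Finset ℕ :=
    fun p => {1, 4} ∪ Finset.Icc (p.1 + 1) (2 * q + p.2 - 2) with hf
  -- image is in the closure
  have hsub : ↑(P.image f) ⊆ unionClosure S := by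
    intro A hA
    simp only [Finset.coe_image, Set.mem_image, Finset.mem_coe] at hA
    obtain ⟨p, hp, rfl⟩ := hA
    simp only [hP, Finset.mem_filter, Finset.mem_product, hI, Finset.mem_Icc] at hp
    obtain ⟨⟨⟨ha1, ha2⟩, hb1, hb2⟩, hab⟩ := hp
    refine ⟨{({1, 4} ∪ Finset.Icc (p.1 + 1) (2 * q + p.1 - 2)),
            ({1, 4} ∪ Finset.Icc (p.2 + 1) (2 * q + p.2 - 2))}, ?_, ?_, ?_⟩
    · intro B hB
      simp only [Finset.coe_insert, Finset.coe_singleton, Set.mem_insert_iff,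
        Set.mem_singleton_iff] at hB
      rcases hB with rfl | rfl
      · exact ⟨p.1, ha1, by omega, by rw [h2]⟩
      · exact ⟨p.2, hb1, by omega, by rw [h2]⟩
    · exact ⟨_, Finset.mem_insert_self _ _⟩
    · rw [Finset.sup_insert, Finset.sup_singleton]
      simp only [id, Finset.sup_eq_union, hf]
      ext x
      simp only [Finset.mem_union, Finset.mem_insert, Finset.mem_singleton,
        Finset.mem_Icc]
      omega
  -- f is injective on P
  have hinj : Set.InjOn f P := by
    intro p hp p' hp' hfp
    simp only [hP, Finset.mem_filter, Finset.mem_product, hI, Finset.mem_Icc,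
      Finset.mem_coe] at hp hp'
    obtain ⟨⟨⟨ha1, ha2⟩, hb1, hb2⟩, hab⟩ := hp
    obtain ⟨⟨⟨ha1', ha2'⟩, hb1', hb2'⟩, hab'⟩ := hp'
    have e1 := Finset.ext_iff.mp hfp (p.1 + 1)
    have e2 := Finset.ext_iff.mp hfp (p'.1 + 1)
    have e3 := Finset.ext_iff.mp hfp (2 * q + p.2 - 2)
    have e4 := Finset.ext_iff.mp hfp (2 * q + p'.2 - 2)
    simp only [hf, Finset.mem_union, Finset.mem_insert, Finset.mem_singleton,
      Finset.mem_Icc] at e1 e2 e3 e4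
    exact Prod.ext_iff.mpr ⟨by omega, by omega⟩
  -- counting: 2 * P.card ≥ I.card ^ 2
  have hswap : P.card = ((I ×ˢ I).filter (fun p => p.2 ≤ p.1)).card := by
    apply Finset.card_nbij' Prod.swap Prod.swap
    · intro p hp
      simp only [hP, Finset.mem_coe, Finset.mem_filter, Finset.mem_product] at hp ⊢
      exact ⟨⟨hp.1.2, hp.1.1⟩, hp.2⟩
    · intro p hp
      simp only [hP, Finset.mem_coe, Finset.mem_filter, Finset.mem_product] at hp ⊢
      exact ⟨⟨hp.1.2, hp.1.1⟩, hp.2⟩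
    · intro p _; rfl
    · intro p _; rfl
  have hcover : I.card ^ 2 ≤ 2 * P.card := by
    have h1 : (I ×ˢ I) ⊆ P ∪ ((I ×ˢ I).filter (fun p => p.2 ≤ p.1)) := by
      intro p hp
      rw [Finset.mem_union, hP, Finset.mem_filter, Finset.mem_filter]
      rcases le_total p.1 p.2 with h | h
      · exact Or.inl ⟨hp, h⟩
      · exact Or.inr ⟨hp, h⟩
    have h2 := (Finset.card_le_card h1).trans (Finset.card_union_le _ _)
    rw [Finset.card_product, ← hswap] at h2
    nlinarith [h2]
  have hIcard : I.card = q - 2 := by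
    have : I.card = q + 2 + 1 - 5 := by rw [hI, Nat.card_Icc]
    omega
  -- cardinality chain into ncard
  have hle : (P.image f).card ≤ (unionClosure S).ncard := by
    rw [← Set.ncard_coe_finset]
    exact Set.ncard_le_ncard hsub hfin
  have himg : (P.image f).card = P.card := Finset.card_image_of_injOn hinj
  have hnat : (4 * q) ^ 2 ≤ 512 * (unionClosure S).ncard := by
    obtain ⟨r, rfl⟩ : ∃ r, q = r + 5 := ⟨q - 5, by omega⟩
    have h5 : r + 5 - 2 = r + 3 := by omega
    have hthis : (r + 3) ^ 2 ≤ 2 * P.card := by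
      rw [← h5, ← hIcard]; exact hcover
    have hPle : P.card ≤ (unionClosure S).ncard := himg ▸ hle
    nlinarith [hPle, hthis]
  have hcast : ((4 * q : ℕ) : ℝ) ^ 2 ≤ 512 * ((unionClosure S).ncard : ℝ) := by
    exact_mod_cast hnat
  push_cast at hcast ⊢
  linarith
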